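/- Let W be an s-dimensional K-vector space with s ≥ 3, V = Λ²W* ⊕ W, and ω the trilinear form with ω(μ,w₁,w₂)=μ(w₁,w₂) and vanishing on Λ²W*×Λ²W*×V and W×W×W. Then Λ²W* is the unique 2-singular subspace of V of codimension s. -/

import Mathlib

open Module LinearMap Submodule

section Aux

variable {K W : Type*} [Field K] [AddCommGroup W] [Module K W]

/-- Auxiliary multilinear map `v ↦ f (v 0) * g (v 1)`. -/
def wAux (f g : Module.Dual K W) : MultilinearMap K (fun _ : Fin 2 => W) K :=
  (MultilinearMap.mkPiAlgebra K (Fin 2) K).compLinearMap ![f, g]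

lemma wAux_apply (f g : Module.Dual K W) (v : Fin 2 → W) :
    wAux f g v = f (v 0) * g (v 1) := by
  simp [wAux, Fin.prod_univ_two]

/-- The wedge of two linear functionals, as an alternating bilinear map. -/
def wedge2 (f g : Module.Dual K W) : AlternatingMap K W K (Fin 2) where
  toMultilinearMap := wAux f g - wAux g f
  map_eq_zero_of_eq' := by
    intro v i j hv hij
    have h01 : v 0 = v 1 := by fin_cases i <;> fin_cases j <;> simp_all
    show wAux f g v - wAux g f v = 0
    simp [wAux_apply, h01, mul_comm]

lemma wedge2_apply (f g : Module.Dual K W) (v : Fin 2 → W) :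
    wedge2 f g v = f (v 0) * g (v 1) - g (v 0) * f (v 1) := by
  show (wAux f g - wAux g f) v = _
  simp [wAux_apply]

/-- Contraction of an alternating 2-form with a fixed vector `w₀` in the second slot. -/
def contr (w₀ : W) : AlternatingMap K W K (Fin 2) →ₗ[K] Module.Dual K W where
  toFun ν :=
    { toFun := fun z => ν ![z, w₀]
      map_add' := fun z z' => ν.map_vecCons_add ![w₀] z z'
      map_smul' := fun c z => ν.map_vecCons_smul ![w₀] c z }
  map_add' ν ν' := by ext z; rfl
  map_smul' c ν := by ext z; rfl

lemma contr_apply (w₀ : W) (ν : AlternatingMap K W K (Fin 2)) (z : W) :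
    contr w₀ ν z = ν ![z, w₀] := rfl

/-- The forgetful linear map from alternating to multilinear maps. -/
def toML : AlternatingMap K W K (Fin 2) →ₗ[K] MultilinearMap K (fun _ : Fin 2 => W) K where
  toFun ν := ν.toMultilinearMap
  map_add' _ _ := rfl
  map_smul' _ _ := rfl

end Aux

/-- The alternating trilinear form on `V = Λ²W* ⊕ W` determined by
`ω(μ₁,μ₂,·) = 0`, `ω(μ,w₁,w₂) = μ(w₁,w₂)` and `ω(w₁,w₂,w₃) = 0`. -/
def ωSplit {K W : Type*} [Field K] [AddCommGroup W] [Module K W]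
    (x y z : AlternatingMap K W K (Fin 2) × W) : K :=
  x.1 ![y.2, z.2] + y.1 ![z.2, x.2] + z.1 ![x.2, y.2]

/-- For `dim W = s ≥ 3`, the subspace `Λ²W*` is the unique
2-singular subspace of `V = Λ²W* ⊕ W` of codimension `s` for `ωSplit`. -/
theorem stmt17 {K W : Type*} [Field K] [AddCommGroup W] [Module K W]
    [FiniteDimensional K W] {s : ℕ} (hs : 3 ≤ s) (hW : Module.finrank K W = s)
    (U : Submodule K (AlternatingMap K W K (Fin 2) × W))
    (hcodim : Module.finrank K U =
      Module.finrank K (AlternatingMap K W K (Fin 2) × W) - s)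
    (hsing : ∀ u ∈ U, ∀ u' ∈ U, ∀ v, ωSplit u u' v = 0) :
    U = LinearMap.ker (LinearMap.snd K (AlternatingMap K W K (Fin 2)) W) := by
  classical
  haveI : FiniteDimensional K (AlternatingMap K W K (Fin 2)) :=
    FiniteDimensional.of_injective (toML (K := K) (W := W))
      AlternatingMap.coe_multilinearMap_injective
  have hV : finrank K (AlternatingMap K W K (Fin 2) × W)
      = finrank K (AlternatingMap K W K (Fin 2)) + s := by
    rw [Module.finrank_prod, hW]
  have hU : finrank K U = finrank K (AlternatingMap K W K (Fin 2)) := by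
    rw [hcodim, hV, Nat.add_sub_cancel]
  have hkersnd :
      finrank K (LinearMap.ker (LinearMap.snd K (AlternatingMap K W K (Fin 2)) W))
        = finrank K (AlternatingMap K W K (Fin 2)) := by
    have h1 := (LinearMap.snd K (AlternatingMap K W K (Fin 2)) W).finrank_range_add_finrank_ker
    have h2 : LinearMap.range (LinearMap.snd K (AlternatingMap K W K (Fin 2)) W) = ⊤ :=
      LinearMap.range_eq_top.mpr LinearMap.snd_surjective
    rw [h2, finrank_top, hW, hV] at h1
    omega
  have hle : U ≤ LinearMap.ker (LinearMap.snd K (AlternatingMap K W K (Fin 2)) W) := by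
    by_contra hnle
    obtain ⟨u, hu, hu2⟩ : ∃ u ∈ U, u.2 ≠ 0 := by
      simp only [SetLike.le_def, LinearMap.mem_ker, LinearMap.snd_apply, not_forall] at hnle
      obtain ⟨u, hu, h⟩ := hnle
      exact ⟨u, hu, h⟩
    have key : ∀ u' ∈ U, ∀ ν : AlternatingMap K W K (Fin 2), ν ![u.2, u'.2] = 0 := by
      intro u' hu' ν
      have h := hsing u hu u' hu' (ν, 0)
      have e1 : u.1 ![u'.2, (0 : W)] = 0 := u.1.map_coord_zero 1 rfl
      have e2 : u'.1 ![(0 : W), u.2] = 0 := u'.1.map_coord_zero 0 rfl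
      simp only [ωSplit, e1, e2, zero_add, add_zero] at h
      exact h
    obtain ⟨g₀, hg₀⟩ : ∃ g : Module.Dual K W, g u.2 ≠ 0 := by
      by_contra h
      push_neg at h
      exact hu2 ((Module.forall_dual_apply_eq_zero_iff K u.2).mp h)
    set g : Module.Dual K W := (g₀ u.2)⁻¹ • g₀ with hg
    have hgw : g u.2 = 1 := by
      simp [hg, inv_mul_cancel₀ hg₀]
    have hspan : ∀ u' ∈ U, u'.2 ∈ Submodule.span K {u.2} := by
      intro u' hu'
      by_contra hns
      obtain ⟨f, hf1, hf2⟩ :=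
        Submodule.exists_dual_map_eq_bot_of_notMem hns inferInstance
      have hfw : f u.2 = 0 := by
        have : f u.2 ∈ (Submodule.span K {u.2}).map f :=
          ⟨u.2, Submodule.mem_span_singleton_self _, rfl⟩
        rw [hf2] at this
        exact (Submodule.mem_bot K).mp this
      have h := key u' hu' (wedge2 g f)
      rw [wedge2_apply] at h
      simp only [Matrix.cons_val_zero, Matrix.cons_val_one, Matrix.head_cons,
        hgw, hfw, one_mul, zero_mul, sub_zero] at h
      exact hf1 h
    set C := contr (K := K) u.2 with hC
    have hUS : U ≤ (LinearMap.ker C).map (LinearMap.inl K (AlternatingMap K W K (Fin 2)) W)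
        ⊔ Submodule.span K {u} := by
      intro u' hu'
      obtain ⟨c, hc⟩ := Submodule.mem_span_singleton.mp (hspan u' hu')
      have h2 : u' - c • u ∈ U := U.sub_mem hu' (U.smul_mem c hu)
      have hsnd : (u' - c • u).2 = 0 := by
        simp [← hc]
      have hker1 : (u' - c • u).1 ∈ LinearMap.ker C := by
        rw [LinearMap.mem_ker]
        ext z
        have h := hsing u hu (u' - c • u) h2 (0, z)
        have e1 : u.1 ![(u' - c • u).2, z] = 0 := by
          rw [hsnd]; exact u.1.map_coord_zero 0 rfl
        simp only [ωSplit, e1, AlternatingMap.zero_apply, zero_add, add_zero] at h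
        simpa [hC, contr_apply] using h
      have hmem : u' - c • u ∈ (LinearMap.ker C).map
          (LinearMap.inl K (AlternatingMap K W K (Fin 2)) W) :=
        ⟨(u' - c • u).1, hker1, by exact Prod.ext rfl hsnd.symm⟩
      have heq : u' = (u' - c • u) + c • u := by abel
      rw [heq]
      exact Submodule.add_mem _ (Submodule.mem_sup_left hmem)
        (Submodule.mem_sup_right (Submodule.smul_mem _ c (Submodule.mem_span_singleton_self u)))
    have hune : u ≠ 0 := fun h => hu2 (by rw [h]; rfl)
    have hdim1 : finrank K (AlternatingMap K W K (Fin 2))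
        ≤ finrank K (LinearMap.ker C) + 1 := by
      calc finrank K (AlternatingMap K W K (Fin 2)) = finrank K U := hU.symm
        _ ≤ finrank K ↥((LinearMap.ker C).map
              (LinearMap.inl K (AlternatingMap K W K (Fin 2)) W) ⊔ Submodule.span K {u}) :=
            Submodule.finrank_mono hUS
        _ ≤ finrank K ↥((LinearMap.ker C).map
              (LinearMap.inl K (AlternatingMap K W K (Fin 2)) W)) +
              finrank K ↥(Submodule.span K {u}) :=
            Submodule.finrank_add_le_finrank_add_finrank _ _
        _ ≤ finrank K (LinearMap.ker C) + 1 := by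
            gcongr
            · exact Submodule.finrank_map_le _ _
            · exact le_of_eq (finrank_span_singleton hune)
    have hrange : LinearMap.ker (Module.Dual.eval K W u.2) ≤ LinearMap.range C := by
      intro f hf
      rw [LinearMap.mem_ker, Module.Dual.eval_apply] at hf
      refine ⟨wedge2 f g, ?_⟩
      ext z
      rw [hC, contr_apply, wedge2_apply]
      simp [hf, hgw]
    have heval : finrank K (LinearMap.ker (Module.Dual.eval K W u.2)) + 1 = s := by
      have h1 := (Module.Dual.eval K W u.2).finrank_range_add_finrank_ker
      have h2 : LinearMap.range (Module.Dual.eval K W u.2) = ⊤ := by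
        rw [LinearMap.range_eq_top]
        intro c
        exact ⟨(c * (g₀ u.2)⁻¹) • g₀, by
          simp [Module.Dual.eval_apply, mul_assoc, inv_mul_cancel₀ hg₀]⟩
      rw [h2, finrank_top, Module.finrank_self, Subspace.dual_finrank_eq, hW] at h1
      omega
    have hdim2 : finrank K (LinearMap.ker (Module.Dual.eval K W u.2)) ≤
        finrank K (LinearMap.range C) := Submodule.finrank_mono hrange
    have hrn := C.finrank_range_add_finrank_ker
    omega
  exact Submodule.eq_of_le_of_finrank_le hle (by rw [hkersnd, hU])
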